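/- Let a, b be homeomorphisms of a compact space X with a² = b² = id, such that the composition b ∘ a is minimal and a has a fixed point. If h : X → ℤ is continuous and satisfies h ∘ a = -h and h ∘ b = -h, then h = 0. -/

import Mathlib

theorem stmt_8 {X : Type*} [TopologicalSpace X] [CompactSpace X] [Nonempty X]
    (a b : X ≃ₜ X) (ha : ∀ x, a (a x) = x) (hb : ∀ x, b (b x) = x)
    (hmin : ∀ x : X, Dense {y : X | ∃ n : ℤ, ((a.toEquiv.trans b.toEquiv) ^ n) x = y})
    (hfix : ∃ x, a x = x)
    (h : X → ℤ) (hc : Continuous h)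
    (hha : ∀ x, h (a x) = -h x) (hhb : ∀ x, h (b x) = -h x) :
    ∀ x, h x = 0 := by
  obtain ⟨x₀, hx₀⟩ := hfix
  have h0 : h x₀ = 0 := by have := hha x₀; rw [hx₀] at this; omega
  set T := a.toEquiv.trans b.toEquiv with hT
  have hTinv : ∀ x, h (T x) = h x := by
    intro x
    simp [hT, Equiv.trans_apply, hhb, hha]
  have hTinv' : ∀ x, h (T.symm x) = h x := by
    intro x
    have := hTinv (T.symm x)
    simpa using this.symm
  have key : ∀ n : ℤ, ∀ x, h ((T ^ n) x) = h x := by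
    intro n
    induction n using Int.induction_on with
    | zero => intro x; simp
    | succ k ih =>
      intro x
      have : T ^ ((k : ℤ) + 1) = T ^ (k : ℤ) * T := by
        rw [zpow_add, zpow_one]
      rw [this]
      simpa [Equiv.Perm.mul_apply] using ih (T x) |>.trans (hTinv x)
    | pred k ih =>
      intro x
      have : T ^ (-(k : ℤ) - 1) = T ^ (-(k : ℤ)) * T⁻¹ := by
        rw [sub_eq_add_neg, zpow_add, zpow_neg_one]
      rw [this]
      have : (T⁻¹ : Equiv.Perm X) x = T.symm x := rfl
      simpa [Equiv.Perm.mul_apply, this] using ih (T.symm x) |>.trans (hTinv' x)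
  intro x
  have hS : IsClosed {y : X | h y = 0} := by
    have : {y : X | h y = 0} = h ⁻¹' {0} := rfl
    rw [this]
    exact (isClosed_discrete _).preimage hc
  have hsub : {y : X | ∃ n : ℤ, (T ^ n) x₀ = y} ⊆ {y : X | h y = 0} := by
    rintro y ⟨n, rfl⟩
    simp [key n x₀, h0]
  have : closure {y : X | ∃ n : ℤ, (T ^ n) x₀ = y} = Set.univ := (hmin x₀).closure_eq
  have hx : x ∈ closure {y : X | ∃ n : ℤ, (T ^ n) x₀ = y} := by rw [this]; trivial
  exact (hS.closure_subset_iff.mpr hsub) hx
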